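/- (Theorem 4.1, Eq. (22).) For every j ∈ {1,2}, every t > 0, and every x with min(v₂t, 0) < x < v₁t, one has 1_{v₂t<x<v₁t}·e^{−ξt}·λ·(1 + λ·τ(x,t)^{j−1}(t − τ(x,t))^{2−j})/((v₁−v₂)(1+λt)²) + ξ·∫₀^t e^{−ξs}·1_{v₂s<x<v₁s}·λ·(1 + λ·τ(x,s)^{j−1}(s − τ(x,s))^{2−j})/((v₁−v₂)(1+λs)²) ds = P_{j',j}(x,t), where j' = 3 − j. -/

import Mathlib

open MeasureTheory Real Filter Topology Set

noncomputable section

namespace TelegraphReset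

open Classical in
/-- Real-valued indicator of a proposition. -/
def ind (P : Prop) : ℝ := if P then 1 else 0

/-- Generalized incomplete gamma function `Γ(0, z₀, z₁) = ∫_{z₀}^{z₁} u⁻¹ e^{-u} du`. -/
def iGamma (z₀ z₁ : ℝ) : ℝ := ∫ u in z₀..z₁, u⁻¹ * Real.exp (-u)

/-- Upper incomplete gamma function `Γ(0, a) = ∫_a^∞ u⁻¹ e^{-u} du`. -/
def uGamma (a : ℝ) : ℝ := ∫ u in Set.Ioi a, u⁻¹ * Real.exp (-u)

/-- `τ(x,t) = (x - v₂ t)/(v₁ - v₂)`. -/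
def tauF (v₁ v₂ x t : ℝ) : ℝ := (x - v₂ * t) / (v₁ - v₂)

/-- The two velocities, indexed by `1` and `2`. -/
def vel (v₁ v₂ : ℝ) : ℕ → ℝ := fun n => if n = 1 then v₁ else v₂

/-- `Γ_λ^ξ(x,t)`, defined piecewise according to the sign of `v₂`. -/
def GamL (v₁ v₂ lam xi x t : ℝ) : ℝ :=
  if v₂ < 0 then iGamma ((max (x / v₁) (x / v₂) + 1 / lam) * xi) ((t + 1 / lam) * xi)
  else iGamma ((x / v₁ + 1 / lam) * xi) ((min (x / v₂) t + 1 / lam) * xi)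

/-- `Θ_λ^ξ(x,t)`, defined piecewise according to the sign of `v₂`. -/
def Theta (v₁ v₂ lam xi x t : ℝ) : ℝ :=
  if v₂ < 0 then
    Real.exp (-(xi * max (x / v₁) (x / v₂))) / (1 + lam * max (x / v₁) (x / v₂))
      - Real.exp (-(xi * t)) / (1 + lam * t)
  else
    Real.exp (-(xi * (x / v₁))) / (1 + lam * (x / v₁))
      - Real.exp (-(xi * min (x / v₂) t)) / (1 + lam * min (x / v₂) t)

/-- Closed-form sub-density `P_{j,j}(x,t)` (Eq. (21)). -/
def Pss (v₁ v₂ lam xi : ℝ) (j : ℕ) (x t : ℝ) : ℝ :=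
  ind (v₂ * t < x ∧ x < v₁ * t) * Real.exp (-(xi * t)) * lam ^ 2 *
      tauF v₁ v₂ x t ^ (2 - j) * (t - tauF v₁ v₂ x t) ^ (j - 1) /
      ((v₁ - v₂) * (1 + lam * t) ^ 2)
  + Real.sign (vel v₁ v₂ j) * ind (0 < x / vel v₁ v₂ j ∧ x / vel v₁ v₂ j < t) * xi *
      Real.exp (-(xi * (x / vel v₁ v₂ j))) / (vel v₁ v₂ j + lam * x)
  + ind (min (v₂ * t) 0 < x ∧ x < v₁ * t) *
      ((-1 : ℝ) ^ (3 - j) * (xi * (vel v₁ v₂ (3 - j) + lam * x) / (v₁ - v₂) ^ 2) *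
          Theta v₁ v₂ lam xi x t
        + (-1 : ℝ) ^ j * (xi * Real.exp (xi / lam) / (v₁ - v₂) ^ 2) *
            (vel v₁ v₂ (3 - j) * (lam + xi) / lam + x * xi) * GamL v₁ v₂ lam xi x t)

/-- Closed-form sub-density `P_{3-j,j}(x,t)` (Eq. (22)). -/
def Pos (v₁ v₂ lam xi : ℝ) (j : ℕ) (x t : ℝ) : ℝ :=
  ind (v₂ * t < x ∧ x < v₁ * t) * Real.exp (-(xi * t)) * lam *
      (1 + lam * tauF v₁ v₂ x t ^ (j - 1) * (t - tauF v₁ v₂ x t) ^ (2 - j)) /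
      ((v₁ - v₂) * (1 + lam * t) ^ 2)
  + ind (min (v₂ * t) 0 < x ∧ x < v₁ * t) *
      ((-1 : ℝ) ^ j * (xi * (vel v₁ v₂ (3 - j) + lam * x) / (v₁ - v₂) ^ 2) *
          Theta v₁ v₂ lam xi x t
        + (-1 : ℝ) ^ (3 - j) * (xi * Real.exp (xi / lam) / (v₁ - v₂) ^ 2) *
            (vel v₁ v₂ j * (lam + xi) / lam + x * xi
              + (-1 : ℝ) ^ j * xi * (v₁ - v₂) / lam) * GamL v₁ v₂ lam xi x t)

/-- Closed-form reset density `p̃(x,t|v_j)` (Eq. (37)). -/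
def pTil (v₁ v₂ lam xi : ℝ) (j : ℕ) (x t : ℝ) : ℝ :=
  Real.sign (vel v₁ v₂ j) * ind (0 < x / vel v₁ v₂ j ∧ x / vel v₁ v₂ j < t) * xi *
      Real.exp (-(xi * (x / vel v₁ v₂ j))) / (vel v₁ v₂ j + lam * x)
  + ind (v₂ * t < x ∧ x < v₁ * t) * lam * Real.exp (-(xi * t)) /
      ((v₁ - v₂) * (1 + lam * t))
  + ind (min (v₂ * t) 0 < x ∧ x < v₁ * t) *
      (xi * Real.exp (xi / lam) / (v₁ - v₂)) * GamL v₁ v₂ lam xi x t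

/-- First moment `E_j[X̃(t)]` (Eq. (54)). -/
def Emom (v₁ v₂ lam xi : ℝ) (j : ℕ) (t : ℝ) : ℝ :=
  (1 - Real.exp (-(xi * t))) *
      ((v₁ + v₂) / (2 * xi) + (vel v₁ v₂ j - vel v₁ v₂ (3 - j)) / (2 * lam))
  - xi * Real.exp (xi / lam) * (vel v₁ v₂ j - vel v₁ v₂ (3 - j)) / (2 * lam ^ 2) *
      iGamma (xi / lam) (xi / lam * (1 + lam * t))
  + t * Real.exp (-(xi * t)) * (vel v₁ v₂ j - vel v₁ v₂ (3 - j)) / (2 * (1 + lam * t))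

/-- Second moment `E_j[X̃²(t)]` (Eq. (55)). -/
def Smom (v₁ v₂ lam xi : ℝ) (j : ℕ) (t : ℝ) : ℝ :=
  (1 - Real.exp (-(xi * t))) *
      (2 * (v₁ ^ 2 + v₁ * v₂ + v₂ ^ 2) / (3 * xi ^ 2)
        + (2 * vel v₁ v₂ j ^ 2 - v₁ * v₂ - vel v₁ v₂ (3 - j) ^ 2) / (3 * lam) *
            (1 / xi - 1 / lam))
  - t * Real.exp (-(xi * t)) *
      (2 * (v₁ ^ 2 + v₁ * v₂ + v₂ ^ 2) / (3 * xi)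
        + (2 * vel v₁ v₂ j ^ 2 - v₁ * v₂ - vel v₁ v₂ (3 - j) ^ 2) /
            (3 * lam * (1 + lam * t)))
  + xi * Real.exp (xi / lam) *
      (2 * vel v₁ v₂ j ^ 2 - v₁ * v₂ - vel v₁ v₂ (3 - j) ^ 2) / (3 * lam ^ 3) *
      iGamma (xi / lam) (xi / lam * (1 + lam * t))

/-- First moment of the reset-free process. -/
def m1 (v₁ v₂ lam : ℝ) (j : ℕ) (t : ℝ) : ℝ :=
  (v₁ + v₂) * t / 2 + (vel v₁ v₂ j - vel v₁ v₂ (3 - j)) * t / (2 * (1 + lam * t))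

/-- Second moment of the reset-free process (Eq. (63)). -/
def m2 (v₁ v₂ lam : ℝ) (j : ℕ) (t : ℝ) : ℝ :=
  t ^ 2 * (3 * vel v₁ v₂ j ^ 2 + lam * t * (v₁ ^ 2 + v₁ * v₂ + v₂ ^ 2)) /
    (3 * (1 + lam * t))


lemma master (v₁ v₂ lam xi x t s₀ s₁ A B : ℝ) (hlam : 0 < lam) (hxi : 0 < xi)
    (h0 : 0 ≤ s₀) (h01 : s₀ ≤ s₁) (h1t : s₁ ≤ t)
    (hC : ({s : ℝ | v₂ * s < x ∧ x < v₁ * s} ∩ Set.Ioc 0 t : Set ℝ) =ᵐ[volume] Set.Ioc s₀ s₁) :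
    (∫ s in (0:ℝ)..t, ind (v₂ * s < x ∧ x < v₁ * s) *
        (A * Real.exp (-(xi * s)) / (1 + lam * s) ^ 2
          + B * Real.exp (-(xi * s)) / (1 + lam * s)))
    = A / lam * (Real.exp (-(xi * s₀)) / (1 + lam * s₀)
          - Real.exp (-(xi * s₁)) / (1 + lam * s₁))
      + (B - A * xi / lam) * (Real.exp (xi / lam) / lam) *
          iGamma ((s₀ + 1 / lam) * xi) ((s₁ + 1 / lam) * xi) := by
  have hlam' : lam ≠ 0 := hlam.ne'
  have ht0 : (0:ℝ) ≤ t := le_trans (le_trans h0 h01) h1t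
  set f : ℝ → ℝ := fun u => u⁻¹ * Real.exp (-u) with hf
  set G : ℝ → ℝ := fun s => A * Real.exp (-(xi * s)) / (1 + lam * s) ^ 2
      + B * Real.exp (-(xi * s)) / (1 + lam * s) with hGdef
  have hCm : MeasurableSet {s : ℝ | v₂ * s < x ∧ x < v₁ * s} := by
    have h : {s : ℝ | v₂ * s < x ∧ x < v₁ * s}
        = {s : ℝ | v₂ * s < x} ∩ {s : ℝ | x < v₁ * s} := rfl
    rw [h]
    exact (measurableSet_lt (measurable_id.const_mul v₂) measurable_const).inter
      (measurableSet_lt measurable_const (measurable_id.const_mul v₁))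
  have key1 : ∀ s : ℝ, ind (v₂ * s < x ∧ x < v₁ * s) * G s
      = Set.indicator {s : ℝ | v₂ * s < x ∧ x < v₁ * s} G s := by
    intro s
    simp only [ind, Set.indicator_apply, Set.mem_setOf_eq]
    split_ifs with h <;> simp
  have hfc : ContinuousOn f (Set.Ioi 0) := by
    apply ContinuousOn.mul
    · exact continuousOn_inv₀.mono (fun u (hu : u ∈ Set.Ioi 0) => ne_of_gt hu)
    · exact (Real.continuous_exp.comp continuous_neg).continuousOn
  have ha₀ : 0 < (s₀ + 1 / lam) * xi := by
    have : (0:ℝ) < 1 / lam := by positivity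
    nlinarith
  -- derivative of the iGamma part
  have hQ : ∀ s ∈ Set.Icc s₀ s₁,
      HasDerivAt (fun u => Real.exp (xi / lam) / lam *
          iGamma ((s₀ + 1 / lam) * xi) ((u + 1 / lam) * xi))
        (Real.exp (-(xi * s)) / (1 + lam * s)) s := by
    intro s hs
    have hs0 : 0 ≤ s := le_trans h0 hs.1
    have hbpos : 0 < (s + 1 / lam) * xi := by
      have : (0:ℝ) < 1 / lam := by positivity
      nlinarith
    have h1s : (0:ℝ) < 1 + lam * s := by nlinarith
    have hinner : HasDerivAt (fun u : ℝ => (u + 1 / lam) * xi) xi s := by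
      simpa using ((hasDerivAt_id s).add_const (1 / lam)).mul_const xi
    have hint : IntervalIntegrable f volume ((s₀ + 1 / lam) * xi) ((s + 1 / lam) * xi) := by
      apply ContinuousOn.intervalIntegrable
      apply hfc.mono
      intro u hu
      rw [Set.mem_uIcc] at hu
      simp only [Set.mem_Ioi]
      rcases hu with ⟨h1, _⟩ | ⟨h1, _⟩ <;> linarith
    have hmeas : StronglyMeasurableAtFilter f (𝓝 ((s + 1 / lam) * xi)) volume :=
      ⟨Set.Ioi 0, Ioi_mem_nhds hbpos, hfc.aestronglyMeasurable measurableSet_Ioi⟩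
    have hcontat : ContinuousAt f ((s + 1 / lam) * xi) :=
      hfc.continuousAt (Ioi_mem_nhds hbpos)
    have hFTC := (intervalIntegral.integral_hasDerivAt_right hint hmeas hcontat).comp s hinner
    have hig : HasDerivAt (fun u => iGamma ((s₀ + 1 / lam) * xi) ((u + 1 / lam) * xi))
        (f ((s + 1 / lam) * xi) * xi) s := hFTC
    have h2 := hig.const_mul (Real.exp (xi / lam) / lam)
    refine h2.congr_deriv (Eq.symm ?_)
    simp only [hf]
    rw [show -((s + 1 / lam) * xi) = -(xi * s) + -(xi / lam) by ring, Real.exp_add,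
      Real.exp_neg (xi / lam)]
    have hbne : (s + 1 / lam) * xi ≠ 0 := hbpos.ne'
    field_simp
    ring
  -- derivative of the elementary part
  have hP : ∀ s ∈ Set.Icc s₀ s₁,
      HasDerivAt (fun u => -(Real.exp (-(xi * u)) / (lam * (1 + lam * u))))
        (Real.exp (-(xi * s)) / (1 + lam * s) ^ 2
          + xi / lam * (Real.exp (-(xi * s)) / (1 + lam * s))) s := by
    intro s hs
    have hs0 : 0 ≤ s := le_trans h0 hs.1
    have h1s : (0:ℝ) < 1 + lam * s := by nlinarith
    have hnum : HasDerivAt (fun u : ℝ => Real.exp (-(xi * u)))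
        (Real.exp (-(xi * s)) * (-xi)) s := by
      have h1 : HasDerivAt (fun u : ℝ => -(xi * u)) (-xi) s := by
        exact (((hasDerivAt_id s).const_mul xi).neg).congr_deriv (by ring)
      exact h1.exp
    have hden : HasDerivAt (fun u : ℝ => lam * (1 + lam * u)) (lam * lam) s := by
      simpa using (((hasDerivAt_id s).const_mul lam).const_add 1).const_mul lam
    have h := (hnum.div hden (by positivity)).neg
    refine h.congr_deriv (Eq.symm ?_)
    field_simp
    ring
  set F : ℝ → ℝ := fun u => A * -(Real.exp (-(xi * u)) / (lam * (1 + lam * u)))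
      + (B - A * xi / lam) * (Real.exp (xi / lam) / lam *
          iGamma ((s₀ + 1 / lam) * xi) ((u + 1 / lam) * xi)) with hFdef
  have hderiv : ∀ s ∈ Set.uIcc s₀ s₁, HasDerivAt F (G s) s := by
    intro s hs
    rw [Set.uIcc_of_le h01] at hs
    have hs0 : 0 ≤ s := le_trans h0 hs.1
    have h1s : (0:ℝ) < 1 + lam * s := by nlinarith
    have h := ((hP s hs).const_mul A).add ((hQ s hs).const_mul (B - A * xi / lam))
    refine h.congr_deriv (Eq.symm ?_)
    simp only [hGdef]
    field_simp
    ring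
  have hGint : IntervalIntegrable G volume s₀ s₁ := by
    apply ContinuousOn.intervalIntegrable
    rw [Set.uIcc_of_le h01]
    have hne : ∀ s ∈ Set.Icc s₀ s₁, (1 + lam * s) ≠ 0 := by
      intro s hs
      have hs0 : 0 ≤ s := le_trans h0 hs.1
      nlinarith
    have hc1 : Continuous fun s : ℝ => Real.exp (-(xi * s)) :=
      Real.continuous_exp.comp ((continuous_const.mul continuous_id).neg)
    have hc2 : Continuous fun s : ℝ => 1 + lam * s :=
      continuous_const.add (continuous_const.mul continuous_id)
    apply ContinuousOn.add
    · exact ((continuous_const.mul hc1).continuousOn).div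
        ((hc2.pow 2).continuousOn) (fun s hs => pow_ne_zero _ (hne s hs))
    · exact ((continuous_const.mul hc1).continuousOn).div hc2.continuousOn hne
  have h1s₀ : (0:ℝ) < 1 + lam * s₀ := by nlinarith
  have h1s₁ : (0:ℝ) < 1 + lam * s₁ := by nlinarith [le_trans h0 h01]
  calc (∫ s in (0:ℝ)..t, ind (v₂ * s < x ∧ x < v₁ * s) * G s)
      = ∫ s in Set.Ioc (0:ℝ) t, Set.indicator {s : ℝ | v₂ * s < x ∧ x < v₁ * s} G s := by
        rw [intervalIntegral.integral_of_le ht0]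
        exact setIntegral_congr_fun measurableSet_Ioc (fun s _ => key1 s)
    _ = ∫ s in {s : ℝ | v₂ * s < x ∧ x < v₁ * s} ∩ Set.Ioc (0:ℝ) t, G s := by
        rw [MeasureTheory.integral_indicator hCm, Measure.restrict_restrict hCm]
    _ = ∫ s in Set.Ioc s₀ s₁, G s := setIntegral_congr_set hC
    _ = ∫ s in s₀..s₁, G s := (intervalIntegral.integral_of_le h01).symm
    _ = F s₁ - F s₀ := intervalIntegral.integral_eq_sub_of_hasDerivAt hderiv hGint
    _ = _ := by
        simp only [hFdef, iGamma, intervalIntegral.integral_same]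
        field_simp
        ring


lemma integral_rw₁ (v₁ v₂ lam xi x t : ℝ) (hlam : 0 < lam) (hv : v₂ < v₁) (ht : 0 ≤ t) :
    (∫ s in (0:ℝ)..t, Real.exp (-(xi * s)) * ind (v₂ * s < x ∧ x < v₁ * s) * lam *
        (1 + lam * tauF v₁ v₂ x s ^ (1 - 1) * (s - tauF v₁ v₂ x s) ^ (2 - 1)) /
        ((v₁ - v₂) * (1 + lam * s) ^ 2))
    = ∫ s in (0:ℝ)..t, ind (v₂ * s < x ∧ x < v₁ * s) *
        (-(lam * (v₂ + lam * x)) / (v₁ - v₂) ^ 2 * Real.exp (-(xi * s)) / (1 + lam * s) ^ 2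
          + lam * v₁ / (v₁ - v₂) ^ 2 * Real.exp (-(xi * s)) / (1 + lam * s)) := by
  apply intervalIntegral.integral_congr
  intro s hs
  rw [Set.uIcc_of_le ht] at hs
  have h1s : (0:ℝ) < 1 + lam * s := by nlinarith [hs.1]
  have hv' : v₁ - v₂ ≠ 0 := sub_ne_zero.2 hv.ne'
  simp only [ind]
  split_ifs with h
  · rw [tauF, show (1:ℕ) - 1 = 0 from rfl, show (2:ℕ) - 1 = 1 from rfl, pow_zero, pow_one]
    field_simp
    ring
  · simp

lemma integral_rw₂ (v₁ v₂ lam xi x t : ℝ) (hlam : 0 < lam) (hv : v₂ < v₁) (ht : 0 ≤ t) :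
    (∫ s in (0:ℝ)..t, Real.exp (-(xi * s)) * ind (v₂ * s < x ∧ x < v₁ * s) * lam *
        (1 + lam * tauF v₁ v₂ x s ^ (2 - 1) * (s - tauF v₁ v₂ x s) ^ (2 - 2)) /
        ((v₁ - v₂) * (1 + lam * s) ^ 2))
    = ∫ s in (0:ℝ)..t, ind (v₂ * s < x ∧ x < v₁ * s) *
        (lam * (v₁ + lam * x) / (v₁ - v₂) ^ 2 * Real.exp (-(xi * s)) / (1 + lam * s) ^ 2
          + -(lam * v₂) / (v₁ - v₂) ^ 2 * Real.exp (-(xi * s)) / (1 + lam * s)) := by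
  apply intervalIntegral.integral_congr
  intro s hs
  rw [Set.uIcc_of_le ht] at hs
  have h1s : (0:ℝ) < 1 + lam * s := by nlinarith [hs.1]
  have hv' : v₁ - v₂ ≠ 0 := sub_ne_zero.2 hv.ne'
  simp only [ind]
  split_ifs with h
  · rw [tauF, show (2:ℕ) - 1 = 1 from rfl, show (2:ℕ) - 2 = 0 from rfl, pow_zero, pow_one]
    field_simp
    ring
  · simp

lemma set_eq₁ (v₁ v₂ x t : ℝ) (hv2n : v₂ < 0) (hv1p : 0 < v₁) (ht : 0 < t)
    (hx1 : v₂ * t < x) (hx2 : x < v₁ * t) :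
    ({s : ℝ | v₂ * s < x ∧ x < v₁ * s} ∩ Set.Ioc 0 t : Set ℝ)
      = Set.Ioc (max (x / v₁) (x / v₂)) t := by
  have h0 : 0 ≤ max (x / v₁) (x / v₂) := by
    rcases le_or_gt 0 x with h | h
    · exact le_max_of_le_left (div_nonneg h hv1p.le)
    · exact le_max_of_le_right (div_nonneg_iff.2 (Or.inr ⟨h.le, hv2n.le⟩))
  ext s
  simp only [Set.mem_inter_iff, Set.mem_setOf_eq, Set.mem_Ioc, max_lt_iff]
  constructor
  · rintro ⟨⟨h1, h2⟩, _, h4⟩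
    refine ⟨⟨(div_lt_iff₀ hv1p).2 (by rw [mul_comm]; exact h2),
      (div_lt_iff_of_neg hv2n).2 (by rw [mul_comm]; exact h1)⟩, h4⟩
  · rintro ⟨⟨hA, hB⟩, h4⟩
    have h2 : x < v₁ * s := by rw [mul_comm]; exact (div_lt_iff₀ hv1p).1 hA
    have h1 : v₂ * s < x := by rw [mul_comm]; exact (div_lt_iff_of_neg hv2n).1 hB
    exact ⟨⟨h1, h2⟩, lt_of_le_of_lt h0 (max_lt_iff.2 ⟨hA, hB⟩), h4⟩

lemma set_ae₂ (v₁ v₂ x t : ℝ) (hv2p : 0 < v₂) (hv : v₂ < v₁) (ht : 0 < t)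
    (hx0 : 0 < x) :
    ({s : ℝ | v₂ * s < x ∧ x < v₁ * s} ∩ Set.Ioc 0 t : Set ℝ)
      =ᵐ[volume] Set.Ioc (x / v₁) (min (x / v₂) t) := by
  have hv1p : 0 < v₁ := lt_trans hv2p hv
  have hsub1 : ({s : ℝ | v₂ * s < x ∧ x < v₁ * s} ∩ Set.Ioc 0 t : Set ℝ)
      ⊆ Set.Ioc (x / v₁) (min (x / v₂) t) := by
    rintro s ⟨⟨h1, h2⟩, _, h4⟩
    refine ⟨(div_lt_iff₀ hv1p).2 (by rw [mul_comm]; exact h2),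
      le_min ((le_div_iff₀ hv2p).2 (by rw [mul_comm]; exact h1.le)) h4⟩
  have hsub2 : Set.Ioc (x / v₁) (min (x / v₂) t)
      \ ({s : ℝ | v₂ * s < x ∧ x < v₁ * s} ∩ Set.Ioc 0 t) ⊆ {x / v₂} := by
    rintro s ⟨⟨hA, hB⟩, hn⟩
    by_contra hne
    have hne' : s ≠ x / v₂ := by simpa using hne
    have hsx : s < x / v₂ := lt_of_le_of_ne (le_trans hB (min_le_left _ _)) hne'
    apply hn
    have h1 : v₂ * s < x := by rw [mul_comm]; exact (lt_div_iff₀ hv2p).1 hsx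
    have h2 : x < v₁ * s := by rw [mul_comm]; exact (div_lt_iff₀ hv1p).1 hA
    have hs0 : 0 < s := lt_trans (div_pos hx0 hv1p) hA
    exact ⟨⟨h1, h2⟩, hs0, le_trans hB (min_le_right _ _)⟩
  refine MeasureTheory.ae_eq_set.2 ⟨?_, measure_mono_null hsub2 (measure_singleton _)⟩
  rw [Set.diff_eq_empty.2 hsub1]
  exact measure_empty


set_option maxHeartbeats 3200000 in
/-- Theorem 4.1, Eq. (22): the reset-renewal transform of the opposite-velocity
sub-density equals the closed form `P_{3-j,j}`. -/
theorem eq22 (v₁ v₂ lam xi : ℝ) (hlam : 0 < lam) (hxi : 0 < xi)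
    (hv : v₂ < v₁) (hv1 : v₁ ≠ 0) (hv2 : v₂ ≠ 0)
    (hcase : (v₂ < 0 ∧ 0 < v₁) ∨ (0 < v₂ ∧ v₂ < v₁)) :
    ∀ j : ℕ, (j = 1 ∨ j = 2) → ∀ t : ℝ, 0 < t → ∀ x : ℝ,
      min (v₂ * t) 0 < x → x < v₁ * t →
      ind (v₂ * t < x ∧ x < v₁ * t) * Real.exp (-(xi * t)) * lam *
          (1 + lam * tauF v₁ v₂ x t ^ (j - 1) * (t - tauF v₁ v₂ x t) ^ (2 - j)) /
          ((v₁ - v₂) * (1 + lam * t) ^ 2)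
      + xi * ∫ s in (0:ℝ)..t,
          Real.exp (-(xi * s)) * ind (v₂ * s < x ∧ x < v₁ * s) * lam *
            (1 + lam * tauF v₁ v₂ x s ^ (j - 1) * (s - tauF v₁ v₂ x s) ^ (2 - j)) /
            ((v₁ - v₂) * (1 + lam * s) ^ 2)
      = Pos v₁ v₂ lam xi j x t := by
  intro j hj t ht x hx1 hx2
  have hv' : v₁ - v₂ ≠ 0 := sub_ne_zero.2 hv.ne'
  have hind1 : ind (min (v₂ * t) 0 < x ∧ x < v₁ * t) = 1 := by
    simp [ind, hx1, hx2]
  simp only [Pos]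
  rw [hind1, one_mul, add_right_inj]
  rcases hcase with ⟨hv2n, hv1p⟩ | ⟨hv2p, -⟩
  · -- case v₂ < 0 < v₁
    have hvt : v₂ * t < 0 := mul_neg_of_neg_of_pos hv2n ht
    have hx1' : v₂ * t < x := by rwa [min_eq_left hvt.le] at hx1
    have h0 : 0 ≤ max (x / v₁) (x / v₂) := by
      rcases le_or_gt 0 x with h | h
      · exact le_max_of_le_left (div_nonneg h hv1p.le)
      · exact le_max_of_le_right (div_nonneg_iff.2 (Or.inr ⟨h.le, hv2n.le⟩))
    have h01 : max (x / v₁) (x / v₂) ≤ t := by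
      apply max_le
      · rw [div_le_iff₀ hv1p]; rw [mul_comm] at hx2; exact hx2.le
      · rw [div_le_iff_of_neg hv2n]; rw [mul_comm] at hx1'; exact hx1'.le
    have hC : ({s : ℝ | v₂ * s < x ∧ x < v₁ * s} ∩ Set.Ioc 0 t : Set ℝ)
        =ᵐ[volume] Set.Ioc (max (x / v₁) (x / v₂)) t := by
      rw [set_eq₁ v₁ v₂ x t hv2n hv1p ht hx1' hx2]
      exact Filter.EventuallyEq.rfl
    have h1s₀ : (0:ℝ) < 1 + lam * max (x / v₁) (x / v₂) := by nlinarith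
    have h1s₁ : (0:ℝ) < 1 + lam * t := by nlinarith
    rcases hj with rfl | rfl
    · rw [integral_rw₁ v₁ v₂ lam xi x t hlam hv ht.le,
        master v₁ v₂ lam xi x t (max (x / v₁) (x / v₂)) t
          (-(lam * (v₂ + lam * x)) / (v₁ - v₂) ^ 2) (lam * v₁ / (v₁ - v₂) ^ 2)
          hlam hxi h0 h01 le_rfl hC]
      simp only [Theta, GamL, if_pos hv2n, vel]
      norm_num
      clear hC hind1 hx1 hx1' hx2 h01 h0
      field_simp
      ring
    · rw [integral_rw₂ v₁ v₂ lam xi x t hlam hv ht.le,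
        master v₁ v₂ lam xi x t (max (x / v₁) (x / v₂)) t
          (lam * (v₁ + lam * x) / (v₁ - v₂) ^ 2) (-(lam * v₂) / (v₁ - v₂) ^ 2)
          hlam hxi h0 h01 le_rfl hC]
      simp only [Theta, GamL, if_pos hv2n, vel]
      norm_num
      clear hC hind1 hx1 hx1' hx2 h01 h0
      field_simp
      ring
  · -- case 0 < v₂ < v₁
    have hv1p : 0 < v₁ := lt_trans hv2p hv
    have hvt : 0 < v₂ * t := mul_pos hv2p ht
    have hx0 : 0 < x := by rwa [min_eq_right hvt.le] at hx1
    have hnn : ¬ v₂ < 0 := not_lt.2 hv2p.le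
    have h0 : 0 ≤ x / v₁ := (div_pos hx0 hv1p).le
    have h01 : x / v₁ ≤ min (x / v₂) t := by
      apply le_min
      · rw [div_le_div_iff₀ hv1p hv2p]; nlinarith
      · rw [div_le_iff₀ hv1p]; rw [mul_comm] at hx2; exact hx2.le
    have h1t : min (x / v₂) t ≤ t := min_le_right _ _
    have hC := set_ae₂ v₁ v₂ x t hv2p hv ht hx0
    have h1s₀ : (0:ℝ) < 1 + lam * (x / v₁) := by nlinarith
    have h1s₁ : (0:ℝ) < 1 + lam * min (x / v₂) t := by nlinarith [le_trans h0 h01]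
    rcases hj with rfl | rfl
    · rw [integral_rw₁ v₁ v₂ lam xi x t hlam hv ht.le,
        master v₁ v₂ lam xi x t (x / v₁) (min (x / v₂) t)
          (-(lam * (v₂ + lam * x)) / (v₁ - v₂) ^ 2) (lam * v₁ / (v₁ - v₂) ^ 2)
          hlam hxi h0 h01 h1t hC]
      simp only [Theta, GamL, if_neg hnn, vel]
      norm_num
      generalize hsa : x / v₁ = a at h1s₀ ⊢
      generalize hsb : min (x / v₂) t = b at h1s₁ ⊢
      clear hC hind1 hx1 hx2 hsa hsb h01 h1t h0
      field_simp
      ring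
    · rw [integral_rw₂ v₁ v₂ lam xi x t hlam hv ht.le,
        master v₁ v₂ lam xi x t (x / v₁) (min (x / v₂) t)
          (lam * (v₁ + lam * x) / (v₁ - v₂) ^ 2) (-(lam * v₂) / (v₁ - v₂) ^ 2)
          hlam hxi h0 h01 h1t hC]
      simp only [Theta, GamL, if_neg hnn, vel]
      norm_num
      generalize hsa : x / v₁ = a at h1s₀ ⊢
      generalize hsb : min (x / v₂) t = b at h1s₁ ⊢
      clear hC hind1 hx1 hx2 hsa hsb h01 h1t h0
      field_simp
      ring


end TelegraphReset
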